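/- There exists a (unique) group homomorphism φ : W → (ZMod 2) × (ZMod 2) with φ(s₁) = φ(s₃) = (1,0) and φ(s₂) = φ(s₄) = (0,1); this φ is surjective, and its kernel is isomorphic to ℤ × ℤ. -/

import Mathlib

/-- The Coxeter matrix of the 4-cycle: off-diagonal entries are `2` for cyclically adjacent
indices and `0` (i.e. `∞`) for the two opposite pairs. -/
def C4 : CoxeterMatrix (Fin 4) where
  M := Matrix.of fun i j : Fin 4 ↦
    if i = j then 1
    else if (i.val + 1) % 4 = j.val ∨ (j.val + 1) % 4 = i.val then 2 else 0
  isSymm := by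
    ext i j
    fin_cases i <;> fin_cases j <;> rfl
  diagonal i := by fin_cases i <;> rfl
  off_diagonal i i' := by fin_cases i <;> fin_cases i' <;> simp

/-- `W`, the right-angled Coxeter group of the 4-cycle. -/
abbrev W : Type := C4.Group

/-- The simple reflections `s₁, s₂, s₃, s₄` of `W`, indexed by `Fin 4`
(so `s 0 = s₁`, `s 1 = s₂`, `s 2 = s₃`, `s 3 = s₄`). -/
def s (i : Fin 4) : W := C4.simple i

namespace RACG4

open DihedralGroup

abbrev D := DihedralGroup 0
abbrev G := D × D

def cs : CoxeterSystem C4 W := C4.toCoxeterSystem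

lemma s_eq (i : Fin 4) : s i = cs.simple i := rfl

def f : Fin 4 → G := ![(sr 0, 1), (1, sr 0), (sr 1, 1), (1, sr 1)]

lemma C4M : ∀ i j, C4.M i j = !![1,2,0,2; 2,1,2,0; 0,2,1,2; 2,0,2,1] i j := by
  intro i j; fin_cases i <;> fin_cases j <;> rfl

lemma liftable : C4.IsLiftable f := by
  intro i j
  rw [show (C4 i j) = C4.M i j from rfl, C4M]
  fin_cases i <;> fin_cases j <;>
    simp [f, pow_succ, Prod.mk_mul_mk, sr_mul_sr, Prod.pow_mk]

def zz : ZMod 0 → ℤ := fun i => i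
@[simp] lemma zz_add (i j : ZMod 0) : zz (i + j) = zz i + zz j := rfl
@[simp] lemma zz_sub (i j : ZMod 0) : zz (i - j) = zz i - zz j := rfl
@[simp] lemma zz_zero : zz 0 = 0 := rfl
@[simp] lemma zz_one : zz 1 = 1 := rfl
lemma zz_inj {i j : ZMod 0} (h : zz i = zz j) : i = j := h

section dihHom
variable {H : Type*} [Group H] (u v : H)

lemma conj_uv (i : ℤ) (hu : u * u = 1) (hv : v * v = 1) :
    (u * v) ^ i * u = u * (u * v) ^ (-i) := by
  have h1 : u⁻¹ = u := inv_eq_of_mul_eq_one_right hu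
  have h2 : v⁻¹ = v := inv_eq_of_mul_eq_one_right hv
  have hc : (MulAut.conj u) (u * v) = (u * v)⁻¹ := by
    simp only [MulAut.conj_apply, mul_inv_rev, h1, h2, ← mul_assoc, hu, one_mul]
  have key := map_zpow (MulAut.conj u) (u * v) (-i)
  rw [hc] at key
  simp only [MulAut.conj_apply, h1] at key
  have h3 : ((u * v)⁻¹) ^ (-i) = (u * v) ^ i := by rw [inv_zpow, zpow_neg, inv_inv]
  rw [h3] at key
  rw [← key, mul_assoc (u * (u * v) ^ (-i)), hu, mul_one]

def dihHom (hu : u * u = 1) (hv : v * v = 1) : D →* H where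
  toFun x := match x with
    | r i => (u * v) ^ zz i
    | sr i => u * (u * v) ^ zz i
  map_one' := by show (u * v) ^ zz 0 = 1; simp
  map_mul' x y := by
    rcases x with i | i <;> rcases y with j | j <;>
      simp only [r_mul_r, r_mul_sr, sr_mul_r, sr_mul_sr]
    · show (u*v) ^ zz (i + j) = (u*v) ^ zz i * (u*v) ^ zz j
      rw [zz_add, zpow_add]
    · show u * (u*v) ^ zz (j - i) = (u*v) ^ zz i * (u * (u*v) ^ zz j)
      rw [← mul_assoc, conj_uv u v (zz i) hu hv, mul_assoc, ← zpow_add, zz_sub]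
      rw [sub_eq_neg_add]
    · show u * (u*v) ^ zz (i + j) = u * (u*v) ^ zz i * (u*v) ^ zz j
      rw [mul_assoc, ← zpow_add, zz_add]
    · show (u*v) ^ zz (j - i) = (u * (u*v) ^ zz i) * (u * (u*v) ^ zz j)
      rw [mul_assoc, ← mul_assoc ((u*v) ^ zz i), conj_uv u v (zz i) hu hv,
        ← mul_assoc, ← mul_assoc, hu, one_mul, ← zpow_add, zz_sub]
      rw [sub_eq_neg_add]

@[simp] lemma dihHom_r (hu : u * u = 1) (hv : v * v = 1) (i : ZMod 0) :
    dihHom u v hu hv (r i) = (u * v) ^ zz i := rfl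

@[simp] lemma dihHom_sr (hu : u * u = 1) (hv : v * v = 1) (i : ZMod 0) :
    dihHom u v hu hv (sr i) = u * (u * v) ^ zz i := rfl

end dihHom

lemma s_sq (i : Fin 4) : s i * s i = 1 := cs.simple_mul_simple_self i

lemma s_comm (i j : Fin 4) (h : C4.M i j = 2) : Commute (s i) (s j) := by
  have hp := cs.simple_mul_simple_pow i j
  rw [h, pow_two] at hp
  have : s i * s j = (s i * s j)⁻¹ := by
    rw [eq_inv_iff_mul_eq_one]; exact hp
  rw [mul_inv_rev] at this
  simp only [s_eq, cs.inv_simple] at this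
  exact this

lemma c01 : Commute (s 0) (s 1) := s_comm 0 1 (by decide)
lemma c03 : Commute (s 0) (s 3) := s_comm 0 3 (by decide)
lemma c21 : Commute (s 2) (s 1) := s_comm 2 1 (by decide)
lemma c23 : Commute (s 2) (s 3) := s_comm 2 3 (by decide)

def h1 : D →* W := dihHom (s 0) (s 2) (s_sq 0) (s_sq 2)
def h2 : D →* W := dihHom (s 1) (s 3) (s_sq 1) (s_sq 3)

lemma comm_h (x y : D) : Commute (h1 x) (h2 y) := by
  have c1 : Commute (s 0 * s 2) (s 1 * s 3) := (c01.mul_right c03).mul_left (c21.mul_right c23)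
  have c2 : Commute (s 0) (s 1 * s 3) := c01.mul_right c03
  have c3 : Commute (s 0 * s 2) (s 1) := c01.mul_left c21
  rcases x with i | i <;> rcases y with j | j <;> simp only [h1, h2, dihHom_r, dihHom_sr]
  · exact (c1.zpow_left _).zpow_right _
  · exact ((c3.zpow_left _).mul_right ((c1.zpow_left _).zpow_right _))
  · exact (c2.zpow_right _).mul_left ((c1.zpow_right _).zpow_left _)
  · exact (c01.mul_right (c2.zpow_right _)).mul_left
      ((c3.zpow_left _).mul_right ((c1.zpow_left _).zpow_right _))

def Ψ : G →* W := h1.noncommCoprod h2 comm_h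
def Φ : W →* G := cs.lift ⟨f, liftable⟩

lemma Φ_s (i : Fin 4) : Φ (s i) = f i := cs.lift_apply_simple liftable i

lemma r_inv (i : ZMod 0) : (r i : D)⁻¹ = r (-i) := by
  apply inv_eq_of_mul_eq_one_right
  rw [r_mul_r, add_neg_cancel, one_def]

lemma r_one_zpow (n : ℤ) : (r 1 : D) ^ n = r (show ZMod 0 from n) := by
  rcases n with m | m
  · rw [Int.ofNat_eq_coe, zpow_natCast, r_one_pow]; rfl
  · rw [zpow_negSucc, r_one_pow, r_inv]
    have : -((m + 1 : ℕ) : ℤ) = Int.negSucc m := by rw [Int.negSucc_eq]; push_cast; ring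
    exact congrArg _ this

lemma left_inv : Ψ.comp Φ = MonoidHom.id W := by
  apply cs.ext_simple
  intro i
  rw [MonoidHom.comp_apply, MonoidHom.id_apply, ← s_eq, Φ_s]
  fin_cases i <;>
    simp [Ψ, f, MonoidHom.noncommCoprod_apply, h1, h2, zz_one, s_eq,
      cs.simple_mul_simple_cancel_left]

lemma Φ_t1 (n : ℤ) : Φ ((s 0 * s 2) ^ n) = (r (show ZMod 0 from n), 1) := by
  rw [map_zpow, map_mul, Φ_s, Φ_s]
  show ((sr 0, 1) * (sr 1, 1) : G) ^ n = _
  rw [Prod.mk_mul_mk, sr_mul_sr, one_mul]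
  have : ((1 : ZMod 0) - 0) = 1 := by norm_num
  rw [this, Prod.pow_def, r_one_zpow, one_zpow]

lemma Φ_t2 (n : ℤ) : Φ ((s 1 * s 3) ^ n) = (1, r (show ZMod 0 from n)) := by
  rw [map_zpow, map_mul, Φ_s, Φ_s]
  show ((1, sr 0) * (1, sr 1) : G) ^ n = _
  rw [Prod.mk_mul_mk, sr_mul_sr, one_mul]
  have : ((1 : ZMod 0) - 0) = 1 := by norm_num
  rw [this, Prod.pow_def, r_one_zpow, one_zpow]

lemma right_inv : Φ.comp Ψ = MonoidHom.id G := by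
  refine MonoidHom.ext fun x => ?_
  rw [MonoidHom.comp_apply, MonoidHom.id_apply]
  rcases x with ⟨x, y⟩
  have key : ∀ x : D, (Ψ (x, 1) = h1 x) ∧ (Ψ (1, x) = h2 x) := by
    intro x
    constructor <;> simp [Ψ, MonoidHom.noncommCoprod_apply]
  have hxy : (x, y) = (x, (1:D)) * ((1:D), y) := by simp
  rw [hxy, map_mul, map_mul, (key x).1, (key y).2]
  rcases x with i | i <;> rcases y with j | j <;>
    simp only [h1, h2, dihHom_r, dihHom_sr, map_mul, Φ_t1, Φ_t2, Φ_s, zz] <;>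
    erw [Φ_t1 i, Φ_t2 j] <;>
    simp [Φ_t1, Φ_t2, Φ_s, f, Prod.mk_mul_mk, sr_mul_r, sr_mul_sr, r_mul_sr, r_mul_r,
      show ∀ i : ZMod 0, (show ZMod 0 from zz i) = i from fun _ => rfl]

def par : D →* Multiplicative (ZMod 2) where
  toFun x := match x with
    | r _ => 1
    | sr _ => Multiplicative.ofAdd 1
  map_one' := rfl
  map_mul' x y := by
    rcases x with i | i <;> rcases y with j | j <;>
      simp only [r_mul_r, r_mul_sr, sr_mul_r, sr_mul_sr] <;> decide

def ψ : G →* Multiplicative (ZMod 2 × ZMod 2) :=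
  (MulEquiv.prodMultiplicative (G := ZMod 2) (H := ZMod 2)).symm.toMonoidHom.comp
    (par.prodMap par)

def φ₀ : W →* Multiplicative (ZMod 2 × ZMod 2) := ψ.comp Φ

lemma hs0 : φ₀ (s 0) = Multiplicative.ofAdd (1, 0) := by
  show ψ (Φ (s 0)) = _; rw [Φ_s]; decide
lemma hs1 : φ₀ (s 1) = Multiplicative.ofAdd (0, 1) := by
  show ψ (Φ (s 1)) = _; rw [Φ_s]; decide
lemma hs2 : φ₀ (s 2) = Multiplicative.ofAdd (1, 0) := by
  show ψ (Φ (s 2)) = _; rw [Φ_s]; decide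
lemma hs3 : φ₀ (s 3) = Multiplicative.ofAdd (0, 1) := by
  show ψ (Φ (s 3)) = _; rw [Φ_s]; decide

lemma hom_eq (φ : W →* Multiplicative (ZMod 2 × ZMod 2))
    (h : φ (s 0) = Multiplicative.ofAdd (1, 0) ∧ φ (s 1) = Multiplicative.ofAdd (0, 1) ∧
      φ (s 2) = Multiplicative.ofAdd (1, 0) ∧ φ (s 3) = Multiplicative.ofAdd (0, 1)) :
    φ = φ₀ := by
  obtain ⟨h0, h1, h2, h3⟩ := h
  apply cs.ext_simple
  intro i
  fin_cases i <;> rw [← s_eq]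
  · exact h0.trans hs0.symm
  · exact h1.trans hs1.symm
  · exact h2.trans hs2.symm
  · exact h3.trans hs3.symm

lemma φ₀_surj : Function.Surjective φ₀ := by
  intro y
  have h4 : y = 1 ∨ y = Multiplicative.ofAdd (1, 0) ∨ y = Multiplicative.ofAdd (0, 1) ∨
      y = Multiplicative.ofAdd (1, 1) := by revert y; decide
  rcases h4 with rfl | rfl | rfl | rfl
  · exact ⟨1, map_one _⟩
  · exact ⟨s 0, hs0⟩
  · exact ⟨s 1, hs1⟩
  · exact ⟨s 0 * s 1, by rw [map_mul, hs0, hs1]; decide⟩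

def θ : Multiplicative (ℤ × ℤ) →* G where
  toFun p := (r ((Multiplicative.toAdd p).1 : ZMod 0), r ((Multiplicative.toAdd p).2 : ZMod 0))
  map_one' := by
    show ((r 0, r 0) : G) = 1
    rw [← one_def]; rfl
  map_mul' p q := by
    show ((r _, r _) : G) = (r _, r _) * (r _, r _)
    rfl

lemma θ_inj : Function.Injective θ := by
  intro a b h
  simp only [θ, MonoidHom.coe_mk, OneHom.coe_mk, Prod.mk.injEq, r.injEq] at h
  rcases h with ⟨h1, h2⟩
  apply Multiplicative.toAdd.injective
  exact Prod.ext (r.inj h1) (r.inj h2)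

lemma range_eq : θ.range = ψ.ker := by
  ext x
  rcases x with ⟨x, y⟩
  constructor
  · rintro ⟨p, hp⟩
    show ψ (x, y) = 1
    rw [← hp]
    rfl
  · intro hx
    have hx' : ψ (x, y) = 1 := hx
    rcases x with i | i <;> rcases y with j | j
    · exact ⟨Multiplicative.ofAdd (i, j), rfl⟩
    · have h12 : (1 : ZMod 2) = 0 := congrArg (fun z => (Multiplicative.toAdd z).2) hx'
      exact absurd h12 (by decide)
    · have h12 : (1 : ZMod 2) = 0 := congrArg (fun z => (Multiplicative.toAdd z).1) hx'
      exact absurd h12 (by decide)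
    · have h12 : (1 : ZMod 2) = 0 := congrArg (fun z => (Multiplicative.toAdd z).1) hx'
      exact absurd h12 (by decide)

noncomputable def kerEquiv : φ₀.ker ≃* Multiplicative (ℤ × ℤ) := by
  have lΦ : ∀ w : W, Ψ (Φ w) = w := fun w => DFunLike.congr_fun left_inv w
  have rΦ : ∀ g : G, Φ (Ψ g) = g := fun g => DFunLike.congr_fun right_inv g
  refine MulEquiv.trans ?_ ((MulEquiv.subgroupCongr range_eq.symm).trans
    (MonoidHom.ofInjective θ_inj).symm)
  exact
    { toFun := fun x => ⟨Φ x.1, x.2⟩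
      invFun := fun y => ⟨Ψ y.1, show ψ (Φ (Ψ y.1)) = 1 from by rw [rΦ]; exact y.2⟩
      left_inv := fun x => Subtype.ext (lΦ x.1)
      right_inv := fun y => Subtype.ext (rΦ y.1)
      map_mul' := fun x y => Subtype.ext (map_mul Φ x.1 y.1) }

end RACG4

/-- There is a unique group homomorphism `φ : W → (ZMod 2) × (ZMod 2)` with
`φ(s₁) = φ(s₃) = (1,0)` and `φ(s₂) = φ(s₄) = (0,1)`; it is surjective and its kernel is
isomorphic to `ℤ × ℤ`. -/
theorem stmt1 :
    (∃! φ : W →* Multiplicative (ZMod 2 × ZMod 2),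
      φ (s 0) = Multiplicative.ofAdd (1, 0) ∧ φ (s 1) = Multiplicative.ofAdd (0, 1) ∧
      φ (s 2) = Multiplicative.ofAdd (1, 0) ∧ φ (s 3) = Multiplicative.ofAdd (0, 1)) ∧
    ∀ φ : W →* Multiplicative (ZMod 2 × ZMod 2),
      (φ (s 0) = Multiplicative.ofAdd (1, 0) ∧ φ (s 1) = Multiplicative.ofAdd (0, 1) ∧
       φ (s 2) = Multiplicative.ofAdd (1, 0) ∧ φ (s 3) = Multiplicative.ofAdd (0, 1)) →
      Function.Surjective φ ∧ Nonempty (φ.ker ≃* Multiplicative (ℤ × ℤ)) := by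
  constructor
  · exact ⟨RACG4.φ₀, ⟨RACG4.hs0, RACG4.hs1, RACG4.hs2, RACG4.hs3⟩,
      fun φ h => RACG4.hom_eq φ h⟩
  · intro φ h
    have hφ := RACG4.hom_eq φ h
    subst hφ
    exact ⟨RACG4.φ₀_surj, ⟨RACG4.kerEquiv⟩⟩
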